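/- Let ψ : [0,∞) → [-1,1] be a C¹ function with ψ(t)² < 1, let r₀ > 0, c ∈ (0,1), and suppose -(√(1-ψ²))'(t) ≥ √(1-ψ(t)²)·(C_κ/S_κ)(t+r₀) - c·(C_κ/S_κ)(t+r₀) for all t ≥ 0, where κ ≤ 0. Then for all t ≥ 0, √(1-ψ(t)²) ≤ (S_κ(r₀)/S_κ(t+r₀))·(√(1-ψ(0)²) - c) + c. -/

import Mathlib

open Set

/-- `S_κ(t)`: `sinh(√(-κ)t)/√(-κ)` for `κ < 0`, and `t` for `κ = 0`. -/
noncomputable def Sk (κ t : ℝ) : ℝ :=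
  if κ < 0 then Real.sinh (Real.sqrt (-κ) * t) / Real.sqrt (-κ) else t

/-- `C_κ = S_κ'`. -/
noncomputable def Ck (κ t : ℝ) : ℝ :=
  if κ < 0 then Real.cosh (Real.sqrt (-κ) * t) else 1

lemma hasDerivAt_Sk (κ : ℝ) (t : ℝ) : HasDerivAt (Sk κ) (Ck κ t) t := by
  unfold Sk Ck
  by_cases h : κ < 0
  · simp only [if_pos h]
    have ha : (0:ℝ) < Real.sqrt (-κ) := Real.sqrt_pos.mpr (by linarith)
    have h1 : HasDerivAt (fun s : ℝ => Real.sqrt (-κ) * s) (Real.sqrt (-κ)) t := by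
      simpa using (hasDerivAt_id t).const_mul (Real.sqrt (-κ))
    have h2 : HasDerivAt (fun s : ℝ => Real.sinh (Real.sqrt (-κ) * s))
        (Real.cosh (Real.sqrt (-κ) * t) * Real.sqrt (-κ)) t :=
      (Real.hasDerivAt_sinh _).comp t h1
    have h3 := h2.div_const (Real.sqrt (-κ))
    have : Real.cosh (Real.sqrt (-κ) * t) * Real.sqrt (-κ) / Real.sqrt (-κ) =
        Real.cosh (Real.sqrt (-κ) * t) := by field_simp
    rwa [this] at h3
  · simp only [if_neg h]
    exact hasDerivAt_id t

lemma Sk_pos (κ : ℝ) {t : ℝ} (ht : 0 < t) : 0 < Sk κ t := by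
  unfold Sk
  by_cases h : κ < 0
  · simp only [if_pos h]
    have ha : (0:ℝ) < Real.sqrt (-κ) := Real.sqrt_pos.mpr (by linarith)
    exact div_pos (Real.sinh_pos_iff.mpr (by positivity)) ha
  · simpa [h] using ht

/-- The Gronwall-type integration step in the finite-topology proof:
if `ψ` is `C¹`, `ψ² < 1`, and
`-(√(1-ψ²))' ≥ √(1-ψ²)(C_κ/S_κ)(t+r₀) - c (C_κ/S_κ)(t+r₀)` for all `t ≥ 0`,
then `√(1-ψ(t)²) ≤ (S_κ(r₀)/S_κ(t+r₀))(√(1-ψ(0)²) - c) + c` for all `t ≥ 0`. -/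
theorem gronwall_angle_estimate
    (κ r₀ c : ℝ) (hκ : κ ≤ 0) (hr₀ : 0 < r₀) (hc : c ∈ Ioo (0:ℝ) 1)
    (ψ : ℝ → ℝ) (hψ : ContDiff ℝ 1 ψ)
    (hrange : ∀ t : ℝ, 0 ≤ t → ψ t ∈ Icc (-1:ℝ) 1)
    (hlt : ∀ t : ℝ, 0 ≤ t → ψ t ^ 2 < 1)
    (hineq : ∀ t : ℝ, 0 ≤ t →
      Real.sqrt (1 - ψ t ^ 2) * (Ck κ (t + r₀) / Sk κ (t + r₀)) -
          c * (Ck κ (t + r₀) / Sk κ (t + r₀)) ≤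
        -(deriv (fun s => Real.sqrt (1 - ψ s ^ 2)) t)) :
    ∀ t : ℝ, 0 ≤ t →
      Real.sqrt (1 - ψ t ^ 2) ≤
        Sk κ r₀ / Sk κ (t + r₀) * (Real.sqrt (1 - ψ 0 ^ 2) - c) + c := by
  set f : ℝ → ℝ := fun s => Real.sqrt (1 - ψ s ^ 2) with hf_def
  -- differentiability of f at points t ≥ 0
  have hdiff : ∀ t : ℝ, 0 ≤ t → DifferentiableAt ℝ f t := by
    intro t ht
    have hu : DifferentiableAt ℝ (fun s => 1 - ψ s ^ 2) t := by
      have := (hψ.differentiable one_ne_zero).differentiableAt (x := t)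
      fun_prop
    have hne : 1 - ψ t ^ 2 ≠ 0 := by have := hlt t ht; intro h; linarith [sq_nonneg (ψ t)]
    exact hu.sqrt hne
  -- the auxiliary function g
  set g : ℝ → ℝ := fun t => Sk κ (t + r₀) * (f t - c) with hg_def
  have hgderiv : ∀ t : ℝ, 0 ≤ t →
      HasDerivAt g (Ck κ (t + r₀) * (f t - c) + Sk κ (t + r₀) * deriv f t) t := by
    intro t ht
    have h1 : HasDerivAt (fun s : ℝ => Sk κ (s + r₀)) (Ck κ (t + r₀)) t := by
      have := (hasDerivAt_Sk κ (t + r₀)).comp t ((hasDerivAt_id t).add_const r₀)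
      simpa [Function.comp_def] using this
    exact h1.mul (((hdiff t ht).hasDerivAt).sub_const c)
  have hSt : ∀ t : ℝ, 0 ≤ t → 0 < Sk κ (t + r₀) := fun t ht => Sk_pos κ (by linarith)
  -- g is antitone on [0,∞)
  have hanti : AntitoneOn g (Ici (0:ℝ)) := by
    apply antitoneOn_of_deriv_nonpos (convex_Ici 0)
    · intro x hx
      exact ((hgderiv x hx).differentiableAt).continuousAt.continuousWithinAt
    · intro x hx
      rw [interior_Ici] at hx
      exact ((hgderiv x (le_of_lt hx)).differentiableAt).differentiableWithinAt
    · intro x hx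
      rw [interior_Ici] at hx
      have hx' : (0:ℝ) ≤ x := le_of_lt hx
      rw [(hgderiv x hx').deriv]
      have hS := hSt x hx'
      have hi := hineq x hx'
      have key : (f x - c) * Ck κ (x + r₀) ≤ -(deriv f x) * Sk κ (x + r₀) := by
        have h1 : (f x - c) * Ck κ (x + r₀) / Sk κ (x + r₀) ≤ -(deriv f x) := by
          have : (f x - c) * Ck κ (x + r₀) / Sk κ (x + r₀) =
              f x * (Ck κ (x + r₀) / Sk κ (x + r₀)) -
                c * (Ck κ (x + r₀) / Sk κ (x + r₀)) := by ring
          rw [this]; exact hi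
        calc (f x - c) * Ck κ (x + r₀)
            = (f x - c) * Ck κ (x + r₀) / Sk κ (x + r₀) * Sk κ (x + r₀) := by
              field_simp
          _ ≤ -(deriv f x) * Sk κ (x + r₀) :=
              mul_le_mul_of_nonneg_right h1 hS.le
      nlinarith
  intro t ht
  have hg0 : g t ≤ g 0 := hanti (self_mem_Ici) ht ht
  have hS0 : 0 < Sk κ (0 + r₀) := hSt 0 le_rfl
  have hSt' : 0 < Sk κ (t + r₀) := hSt t ht
  have hg0' : Sk κ (t + r₀) * (f t - c) ≤ Sk κ r₀ * (f 0 - c) := by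
    have : (0:ℝ) + r₀ = r₀ := by ring
    simpa [hg_def, this] using hg0
  rw [div_mul_eq_mul_div, ← sub_le_iff_le_add, le_div_iff₀ hSt']
  nlinarith
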